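/- Let i ∈ [0, N−1] and let M be a nonempty subset of {m ∈ [i, N−1] : |S_m \ S_i| ≥ 2}. Then the Hamming weight of g_i ⊕ ⊕_{m∈M} g_m is strictly greater than w(g_i) = 2^{|S_i|}. -/

import Mathlib

noncomputable section
open scoped Classical
open Finset

/-- The 2×2 binary matrix [[1,0],[1,1]], as an ℕ-indexed function (zero outside range). -/
def G2 (a b : ℕ) : ZMod 2 :=
  if a = 0 ∧ b = 0 then 1
  else if a = 1 ∧ b = 0 then 1
  else if a = 1 ∧ b = 1 then 1
  else 0

/-- `G n i c` is the (i,c) entry of the n-th Kronecker power over F₂ of [[1,0],[1,1]],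
for row/column indices i, c ∈ [0, 2^n − 1] (standard row-major index flattening). -/
def G : ℕ → ℕ → ℕ → ZMod 2
  | 0 => fun i c => if i = 0 ∧ c = 0 then 1 else 0
  | n + 1 => fun i c => G2 (i / 2 ^ n) (c / 2 ^ n) * G n (i % 2 ^ n) (c % 2 ^ n)

/-- Row i of the polar transform G_N (N = 2^n), as a vector of its coordinates. -/
def g (n i : ℕ) : ℕ → ZMod 2 := fun c => G n i c

/-- S_i ⊆ [0, n−1]: the support of the binary representation of i. -/
def S (n i : ℕ) : Finset ℕ := (Finset.range n).filter fun a => i.testBit a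

/-- T_i = [0, n−1] \ S_i. -/
def T (n i : ℕ) : Finset ℕ := Finset.range n \ S n i

/-- Hamming weight of a vector whose coordinates are indexed by [0, 2^n − 1]. -/
def wt (n : ℕ) (v : ℕ → ZMod 2) : ℕ :=
  ((Finset.range (2 ^ n)).filter fun c => v c ≠ 0).card

/-- The index in [0, 2^n − 1] whose binary support is the set U ⊆ [0, n−1]. -/
def idx (U : Finset ℕ) : ℕ := ∑ a ∈ U, 2 ^ a

/-- K_i = {j ∈ [i+1, N−1] : w(g_j) ≥ w(g_i ⊕ g_j) and w(g_i ⊕ g_j) = w(g_i)}. -/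
def K (n i : ℕ) : Finset ℕ :=
  (Finset.Ico (i + 1) (2 ^ n)).filter fun j =>
    wt n (g n i + g n j) ≤ wt n (g n j) ∧ wt n (g n i + g n j) = wt n (g n i)

/-- One generating step of the partial order on [0, 2^n − 1]. -/
def poStep (n i j : ℕ) : Prop :=
  i < 2 ^ n ∧ j < 2 ^ n ∧
    (S n i ⊆ S n j ∨
      ∃ a b, a ∈ S n i ∧ b ∉ S n i ∧ a < b ∧ S n j = insert b (S n i \ {a}))

/-- The partial order ⪯: reflexive–transitive closure of the generating relation. -/
def po (n : ℕ) : ℕ → ℕ → Prop := Relation.ReflTransGen (poStep n)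

/-- Partial Order Property of an information set I ⊆ [0, 2^n − 1]. -/
def POP (n : ℕ) (I : Finset ℕ) : Prop :=
  ∀ i ∈ I, ∀ j, j < 2 ^ n → po n i j → j ∈ I

/-- The code C(I): all F₂-linear combinations (i.e. subset sums) of the rows g_i, i ∈ I. -/
def codewords (n : ℕ) (I : Finset ℕ) : Finset (ℕ → ZMod 2) :=
  I.powerset.image fun H => ∑ h ∈ H, g n h

/-- A_w(I): the number of codewords of C(I) of Hamming weight w. -/
def A (n : ℕ) (I : Finset ℕ) (w : ℕ) : ℕ :=
  ((codewords n I).filter fun v => wt n v = w).card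

/-- The coset C_i(I) = {g_i ⊕ ⊕_{h∈H} g_h : H ⊆ I \ [0,i]}. -/
def coset (n : ℕ) (I : Finset ℕ) (i : ℕ) : Finset (ℕ → ZMod 2) :=
  ((I.filter fun h => i < h).powerset).image fun H => g n i + ∑ h ∈ H, g n h

/-- A_{i,w}(I): the number of vectors of Hamming weight w in the coset C_i(I). -/
def Ai (n : ℕ) (I : Finset ℕ) (i w : ℕ) : ℕ :=
  ((coset n I i).filter fun v => wt n v = w).card

/-! ### Auxiliary lemmas -/

lemma mem_S {n i a : ℕ} : a ∈ S n i ↔ a < n ∧ i.testBit a := by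
  simp [S, Finset.mem_filter, Finset.mem_range]

lemma S_subset_range (n i : ℕ) : S n i ⊆ Finset.range n := Finset.filter_subset _ _

lemma S_inj {n c c' : ℕ} (hc : c < 2 ^ n) (hc' : c' < 2 ^ n) (h : S n c = S n c') : c = c' := by
  refine Nat.eq_of_testBit_eq fun b => ?_
  by_cases hb : b < n
  · have := Finset.ext_iff.mp h b
    simp only [mem_S, hb, true_and] at this
    by_cases h1 : c.testBit b <;> by_cases h2 : c'.testBit b <;> simp_all
  · push_neg at hb
    rw [Nat.testBit_lt_two_pow (lt_of_lt_of_le hc (Nat.pow_le_pow_right (by norm_num) hb)),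
      Nat.testBit_lt_two_pow (lt_of_lt_of_le hc' (Nat.pow_le_pow_right (by norm_num) hb))]

lemma sum_range_two_pow (n : ℕ) : ∑ a ∈ Finset.range n, 2 ^ a = 2 ^ n - 1 := by
  induction n with
  | zero => simp
  | succ k ih => rw [Finset.sum_range_succ, ih, pow_succ]; omega

lemma idx_lt {n : ℕ} {U : Finset ℕ} (hU : U ⊆ Finset.range n) : idx U < 2 ^ n := by
  calc idx U ≤ ∑ a ∈ Finset.range n, 2 ^ a :=
        Finset.sum_le_sum_of_subset hU
    _ = 2 ^ n - 1 := sum_range_two_pow n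
    _ < 2 ^ n := by have := Nat.one_le_two_pow (n := n); omega

lemma testBit_two_pow_add {n x b : ℕ} (hx : x < 2 ^ n) :
    (2 ^ n + x).testBit b = if b = n then true else x.testBit b := by
  rcases lt_trichotomy b n with hb | rfl | hb
  · have h1 : 2 ^ n = 2 ^ b * (2 * 2 ^ (n - b - 1)) := by
      rw [← pow_succ', ← pow_add]
      congr 1
      omega
    simp only [Nat.testBit_eq_decide_div_mod_eq, if_neg (by omega : ¬ b = n)]
    rw [h1, Nat.mul_add_div (Nat.two_pow_pos b), Nat.mul_add_mod]
  · simp only [Nat.testBit_eq_decide_div_mod_eq, if_pos rfl]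
    rw [Nat.add_div_left _ (Nat.two_pow_pos _), Nat.div_eq_of_lt hx]
    simp
  · rw [if_neg (by omega), Nat.testBit_lt_two_pow, Nat.testBit_lt_two_pow]
    · exact lt_of_lt_of_le hx (Nat.pow_le_pow_right (by norm_num) (by omega))
    · have : 2 ^ n + x < 2 ^ (n + 1) := by
        have := Nat.one_le_two_pow (n := n); rw [pow_succ]; omega
      exact lt_of_lt_of_le this (Nat.pow_le_pow_right (by norm_num) (by omega))

lemma testBit_idx {n : ℕ} {U : Finset ℕ} (hU : U ⊆ Finset.range n) (b : ℕ) :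
    (idx U).testBit b = decide (b ∈ U) := by
  induction n generalizing U with
  | zero =>
    have : U = ∅ := Finset.subset_empty.mp (by simpa using hU)
    subst this; simp [idx]
  | succ k ih =>
    by_cases hk : k ∈ U
    · have hU' : U.erase k ⊆ Finset.range k := by
        intro a ha
        have h1 := hU (Finset.mem_of_mem_erase ha)
        have h2 := Finset.ne_of_mem_erase ha
        simp only [Finset.mem_range] at h1 ⊢
        omega
      have hidx : idx U = 2 ^ k + idx (U.erase k) := (Finset.add_sum_erase _ _ hk).symm
      rw [hidx, testBit_two_pow_add (idx_lt hU'), ih hU']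
      by_cases hb : b = k
      · subst hb; simp [hk]
      · simp only [if_neg hb]
        congr 1
        simp [Finset.mem_erase, hb]
    · have hU' : U ⊆ Finset.range k := by
        intro a ha
        have h1 := hU ha
        simp only [Finset.mem_range] at h1 ⊢
        rcases Nat.lt_succ_iff_lt_or_eq.mp h1 with h | rfl
        · exact h
        · exact absurd ha hk
      exact ih hU'

lemma S_idx {n : ℕ} {U : Finset ℕ} (hU : U ⊆ Finset.range n) : S n (idx U) = U := by
  ext a
  simp only [mem_S, testBit_idx hU, decide_eq_true_eq]
  constructor
  · exact fun h => h.2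
  · exact fun h => ⟨Finset.mem_range.mp (hU h), h⟩

lemma idx_S {n c : ℕ} (hc : c < 2 ^ n) : idx (S n c) = c :=
  S_inj (idx_lt (S_subset_range n c)) hc (S_idx (S_subset_range n c))

lemma mem_S_succ {n c a : ℕ} :
    a ∈ S (n + 1) c ↔ a ∈ S n (c % 2 ^ n) ∨ (a = n ∧ c.testBit n) := by
  simp only [mem_S, Nat.testBit_mod_two_pow, Bool.and_eq_true, decide_eq_true_eq]
  constructor
  · rintro ⟨ha, hb⟩
    rcases Nat.lt_succ_iff_lt_or_eq.mp ha with h | rfl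
    · exact Or.inl ⟨h, h, hb⟩
    · exact Or.inr ⟨rfl, hb⟩
  · rintro (⟨h1, _, h3⟩ | ⟨rfl, h⟩)
    · exact ⟨by omega, h3⟩
    · exact ⟨by omega, h⟩

lemma testBit_hi {n i : ℕ} (hi : i < 2 ^ (n + 1)) : i.testBit n = decide (i / 2 ^ n = 1) := by
  have h2 : i / 2 ^ n < 2 := by
    rw [Nat.div_lt_iff_lt_mul (Nat.two_pow_pos n)]
    rw [pow_succ] at hi
    omega
  rw [Nat.testBit_eq_decide_div_mod_eq, Nat.mod_eq_of_lt h2]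

lemma S_succ_subset {n i c : ℕ} :
    S (n + 1) c ⊆ S (n + 1) i ↔
      (S n (c % 2 ^ n) ⊆ S n (i % 2 ^ n) ∧ (c.testBit n → i.testBit n)) := by
  constructor
  · intro h
    constructor
    · intro a ha
      have h1 : a ∈ S (n + 1) i := h (mem_S_succ.mpr (Or.inl ha))
      rcases mem_S_succ.mp h1 with h2 | ⟨rfl, _⟩
      · exact h2
      · exact absurd (mem_S.mp ha).1 (lt_irrefl _)
    · intro hc
      have h1 : n ∈ S (n + 1) i := h (mem_S_succ.mpr (Or.inr ⟨rfl, hc⟩))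
      rcases mem_S_succ.mp h1 with h2 | ⟨_, h3⟩
      · exact absurd (mem_S.mp h2).1 (lt_irrefl _)
      · exact h3
  · rintro ⟨h1, h2⟩ a ha
    rcases mem_S_succ.mp ha with h3 | ⟨rfl, h4⟩
    · exact mem_S_succ.mpr (Or.inl (h1 h3))
    · exact mem_S_succ.mpr (Or.inr ⟨rfl, h2 h4⟩)

lemma G_eq {n : ℕ} : ∀ {i c : ℕ}, i < 2 ^ n → c < 2 ^ n →
    G n i c = if S n c ⊆ S n i then 1 else 0 := by
  induction n with
  | zero =>
    intro i c hi hc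
    interval_cases i
    interval_cases c
    simp [G]
  | succ n ih =>
    intro i c hi hc
    have hi' : i % 2 ^ n < 2 ^ n := Nat.mod_lt _ (Nat.two_pow_pos n)
    have hc' : c % 2 ^ n < 2 ^ n := Nat.mod_lt _ (Nat.two_pow_pos n)
    have hdi : i / 2 ^ n < 2 := by
      rw [Nat.div_lt_iff_lt_mul (Nat.two_pow_pos n)]
      rw [pow_succ] at hi; omega
    have hdc : c / 2 ^ n < 2 := by
      rw [Nat.div_lt_iff_lt_mul (Nat.two_pow_pos n)]
      rw [pow_succ] at hc; omega
    show G2 (i / 2 ^ n) (c / 2 ^ n) * G n (i % 2 ^ n) (c % 2 ^ n) = _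
    have key : (S (n + 1) c ⊆ S (n + 1) i) ↔
        (S n (c % 2 ^ n) ⊆ S n (i % 2 ^ n) ∧
          (decide (c / 2 ^ n = 1) = true → decide (i / 2 ^ n = 1) = true)) := by
      rw [S_succ_subset, testBit_hi hi, testBit_hi hc]
    rw [ih hi' hc']
    simp only [key]
    interval_cases h1 : (i / 2 ^ n) <;> interval_cases h2 : (c / 2 ^ n) <;>
      by_cases hsub : S n (c % 2 ^ n) ⊆ S n (i % 2 ^ n) <;>
      simp [G2, hsub]

/-- if M is a nonempty subset of {m ∈ [i,N−1] : |S_m \ S_i| ≥ 2}, then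
w(g_i ⊕ ⊕_{m∈M} g_m) > w(g_i) = 2^{|S_i|}. -/
theorem weight_strictly_greater (n : ℕ) (hn : 1 ≤ n) (i : ℕ) (hi : i < 2 ^ n)
    (M : Finset ℕ)
    (hM : M ⊆ (Finset.Ico i (2 ^ n)).filter fun m => 2 ≤ (S n m \ S n i).card)
    (hne : M.Nonempty) :
    2 ^ (S n i).card < wt n (g n i + ∑ m ∈ M, g n m) ∧
      wt n (g n i) = 2 ^ (S n i).card := by
  classical
  have h2pos : (0 : ℕ) < 2 ^ n := Nat.two_pow_pos n
  have hMlt : ∀ m ∈ M, m < 2 ^ n := fun m hm =>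
    (Finset.mem_Ico.mp (Finset.mem_filter.mp (hM hm)).1).2
  have hMcard : ∀ m ∈ M, 2 ≤ (S n m \ S n i).card := fun m hm =>
    (Finset.mem_filter.mp (hM hm)).2
  set fs : ℕ → ZMod 2 := ∑ m ∈ M, g n m with hfs
  have hfs_apply : ∀ c, fs c = ∑ m ∈ M, G n m c := by
    intro c
    rw [hfs, Finset.sum_apply]
    rfl
  have hfsF : ∀ c, c < 2 ^ n →
      fs c = (((M.filter fun m => S n c ⊆ S n m).card : ℕ) : ZMod 2) := by
    intro c hc
    rw [hfs_apply, Finset.sum_congr rfl (fun m hm => G_eq (hMlt m hm) hc)]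
    exact Finset.sum_boole _ _
  have hfs_ne : ∀ c, c < 2 ^ n →
      (fs c ≠ 0 ↔ ¬ (2 ∣ (M.filter fun m => S n c ⊆ S n m).card)) := by
    intro c hc
    rw [hfsF c hc]
    rw [not_iff_not.mpr (ZMod.natCast_eq_zero_iff _ 2).symm]
  -- the support set of g_i among columns
  set Acols := (Finset.range (2 ^ n)).filter (fun c => S n c ⊆ S n i) with hAcols
  set Bcols := (Finset.range (2 ^ n)).filter (fun c => ¬ S n c ⊆ S n i) with hBcols
  have cardA : Acols.card = 2 ^ (S n i).card := by
    rw [← Finset.card_powerset]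
    refine Finset.card_bij' (fun c _ => S n c) (fun U _ => idx U) ?_ ?_ ?_ ?_
    · intro c hc
      simp only [hAcols, Finset.mem_filter] at hc
      exact Finset.mem_powerset.mpr hc.2
    · intro U hU
      have hUr : U ⊆ Finset.range n :=
        (Finset.mem_powerset.mp hU).trans (S_subset_range n i)
      simp only [hAcols, Finset.mem_filter, Finset.mem_range]
      exact ⟨idx_lt hUr, by rw [S_idx hUr]; exact Finset.mem_powerset.mp hU⟩
    · intro c hc
      simp only [hAcols, Finset.mem_filter, Finset.mem_range] at hc
      exact idx_S hc.1
    · intro U hU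
      exact S_idx ((Finset.mem_powerset.mp hU).trans (S_subset_range n i))
  have wtgi : wt n (g n i) = Acols.card := by
    unfold wt
    congr 1
    apply Finset.filter_congr
    intro c hc
    rw [Finset.mem_range] at hc
    rw [show g n i c = G n i c from rfl, G_eq hi hc]
    by_cases hsub : S n c ⊆ S n i <;> simp [hsub]
  refine ⟨?_, by rw [wtgi, cardA]⟩
  -- choose m₀ and the bit a
  obtain ⟨m₀, hm₀⟩ := hne
  have hm₀card := hMcard m₀ hm₀
  obtain ⟨a, ha⟩ := Finset.card_pos.mp (by omega : 0 < (S n m₀ \ S n i).card)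
  have haS : a ∈ S n m₀ := (Finset.mem_sdiff.mp ha).1
  have haNS : a ∉ S n i := (Finset.mem_sdiff.mp ha).2
  -- the fiber parity lemma
  have hfiber : ∀ R : Finset ℕ, R ⊆ S n i →
      ∑ c ∈ (Finset.range (2 ^ n)).filter
          (fun c => S n c ∩ S n i = R ∧ a ∉ S n c), fs c = 0 := by
    intro R hR
    set fib := (Finset.range (2 ^ n)).filter
      (fun c => S n c ∩ S n i = R ∧ a ∉ S n c) with hfib
    have : ∑ c ∈ fib, fs c = ∑ m ∈ M, ∑ c ∈ fib, G n m c := by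
      rw [Finset.sum_congr rfl (fun c hc => hfs_apply c), Finset.sum_comm]
    rw [this]
    refine Finset.sum_eq_zero fun m hm => ?_
    have hmlt := hMlt m hm
    have hsum : ∑ c ∈ fib, G n m c = (((fib.filter fun c => S n c ⊆ S n m).card : ℕ) : ZMod 2) := by
      rw [Finset.sum_congr rfl (fun c hc => G_eq hmlt
        (Finset.mem_range.mp (Finset.mem_filter.mp (hfib ▸ hc)).1))]
      exact Finset.sum_boole _ _
    rw [hsum, ZMod.natCast_eq_zero_iff]
    by_cases hRm : R ⊆ S n m
    · -- the filter is in bijection with the powerset of D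
      set D := (S n m \ S n i).erase a with hD
      have hDcard : 1 ≤ D.card := by
        have h1 := hMcard m hm
        have h2 : (S n m \ S n i).card - 1 ≤ D.card := by
          rw [hD]
          by_cases haD : a ∈ S n m \ S n i
          · rw [Finset.card_erase_of_mem haD]
          · rw [Finset.erase_eq_of_notMem haD]; omega
        omega
      have hcard : (fib.filter fun c => S n c ⊆ S n m).card = 2 ^ D.card := by
        rw [← Finset.card_powerset]
        refine Finset.card_bij' (fun c _ => S n c \ S n i) (fun U _ => idx (R ∪ U)) ?_ ?_ ?_ ?_
        · intro c hc
          simp only [hfib, Finset.mem_filter, Finset.mem_range] at hc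
          obtain ⟨⟨hclt, hcR, hca⟩, hcm⟩ := hc
          refine Finset.mem_powerset.mpr fun x hx => ?_
          rw [Finset.mem_sdiff] at hx
          rw [hD, Finset.mem_erase, Finset.mem_sdiff]
          exact ⟨fun hxa => hca (hxa ▸ hx.1), hcm hx.1, hx.2⟩
        · intro U hU
          have hUD : U ⊆ D := Finset.mem_powerset.mp hU
          have hUS : U ⊆ S n m \ S n i := hUD.trans (Finset.erase_subset _ _)
          have hRUr : R ∪ U ⊆ Finset.range n := by
            intro x hx
            rcases Finset.mem_union.mp hx with h | h
            · exact S_subset_range n i (hR h)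
            · exact S_subset_range n m (Finset.mem_sdiff.mp (hUS h)).1
          have hSidx : S n (idx (R ∪ U)) = R ∪ U := S_idx hRUr
          simp only [hfib, Finset.mem_filter, Finset.mem_range]
          refine ⟨⟨idx_lt hRUr, ?_, ?_⟩, ?_⟩
          · rw [hSidx]
            rw [Finset.union_inter_distrib_right]
            rw [Finset.inter_eq_left.mpr hR]
            have : U ∩ S n i = ∅ := by
              apply Finset.eq_empty_of_forall_notMem
              intro x hx
              rw [Finset.mem_inter] at hx
              exact (Finset.mem_sdiff.mp (hUS hx.1)).2 hx.2
            rw [this, Finset.union_empty]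
          · rw [hSidx]
            intro hmem
            rcases Finset.mem_union.mp hmem with h | h
            · exact haNS (hR h)
            · exact Finset.ne_of_mem_erase (hUD h) rfl
          · rw [hSidx]
            intro x hx
            rcases Finset.mem_union.mp hx with h | h
            · exact hRm h
            · exact (Finset.mem_sdiff.mp (hUS h)).1
        · intro c hc
          simp only [hfib, Finset.mem_filter, Finset.mem_range] at hc
          obtain ⟨⟨hclt, hcR, _⟩, _⟩ := hc
          show idx (R ∪ (S n c \ S n i)) = c
          rw [← hcR, Finset.union_comm, Finset.sdiff_union_inter]
          exact idx_S hclt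
        · intro U hU
          have hUD : U ⊆ D := Finset.mem_powerset.mp hU
          have hUS : U ⊆ S n m \ S n i := hUD.trans (Finset.erase_subset _ _)
          have hRUr : R ∪ U ⊆ Finset.range n := by
            intro x hx
            rcases Finset.mem_union.mp hx with h | h
            · exact S_subset_range n i (hR h)
            · exact S_subset_range n m (Finset.mem_sdiff.mp (hUS h)).1
          show S n (idx (R ∪ U)) \ S n i = U
          rw [S_idx hRUr]
          ext x
          rw [Finset.mem_sdiff, Finset.mem_union]
          constructor
          · rintro ⟨h1 | h1, h2⟩
            · exact absurd (hR h1) h2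
            · exact h1
          · intro hx
            exact ⟨Or.inr hx, (Finset.mem_sdiff.mp (hUS hx)).2⟩
      rw [hcard]
      exact dvd_pow_self 2 (by omega)
    · have : (fib.filter fun c => S n c ⊆ S n m) = ∅ := by
        apply Finset.eq_empty_of_forall_notMem
        intro c hc
        simp only [hfib, Finset.mem_filter, Finset.mem_range] at hc
        obtain ⟨⟨_, hcR, _⟩, hcm⟩ := hc
        exact hRm (by rw [← hcR]; exact fun x hx => hcm (Finset.mem_inter.mp hx).1)
      rw [this]
      simp
  -- Claim B': a column c* outside Acols, with bit a set, where fs ≠ 0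
  obtain ⟨ms, hmsMa, hmsmax⟩ := Finset.exists_max_image (M.filter fun m => a ∈ S n m)
    (fun m => (S n m).card) ⟨m₀, Finset.mem_filter.mpr ⟨hm₀, haS⟩⟩
  obtain ⟨hmsM, hams⟩ := Finset.mem_filter.mp hmsMa
  have hmslt := hMlt ms hmsM
  have hsingle : (M.filter fun m => S n ms ⊆ S n m) = {ms} := by
    ext m
    rw [Finset.mem_filter, Finset.mem_singleton]
    constructor
    · rintro ⟨hmM, hsub⟩
      have hmMa : m ∈ M.filter fun m => a ∈ S n m :=
        Finset.mem_filter.mpr ⟨hmM, hsub hams⟩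
      have hcardle := hmsmax m hmMa
      have : S n ms = S n m := Finset.eq_of_subset_of_card_le hsub hcardle
      exact (S_inj (hMlt m hmM) hmslt this.symm)
    · rintro rfl
      exact ⟨hmsM, Finset.Subset.refl _⟩
  have hfs_ms : fs ms ≠ 0 := by
    rw [hfs_ne ms hmslt, hsingle]
    simp
  have hmsB : ms ∈ Bcols := by
    rw [hBcols, Finset.mem_filter, Finset.mem_range]
    exact ⟨hmslt, fun hsub => haNS (hsub hams)⟩
  -- counts
  set wA := (Acols.filter fun c => fs c ≠ 0).card with hwA
  set B1 := (Finset.range (2 ^ n)).filter (fun c => ¬ S n c ⊆ S n i ∧ a ∉ S n c) with hB1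
  set wB := (Bcols.filter fun c => fs c ≠ 0).card with hwB
  -- injection from A-support into B1-support
  have hex : ∀ c ∈ Acols.filter fun c => fs c ≠ 0,
      ∃ c', (c' ∈ B1.filter fun c => fs c ≠ 0) ∧ S n c' ∩ S n i = S n c := by
    intro c hc
    rw [Finset.mem_filter] at hc
    obtain ⟨hcA, hcne⟩ := hc
    rw [hAcols, Finset.mem_filter, Finset.mem_range] at hcA
    obtain ⟨hclt, hcsub⟩ := hcA
    set R := S n c with hR
    have hRsub : R ⊆ S n i := hcsub
    set fib := (Finset.range (2 ^ n)).filter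
      (fun c' => S n c' ∩ S n i = R ∧ a ∉ S n c') with hfib
    have hcfib : c ∈ fib := by
      rw [hfib, Finset.mem_filter, Finset.mem_range]
      exact ⟨hclt, Finset.inter_eq_left.mpr hcsub,
        fun hac => haNS (hcsub hac)⟩
    have hsum0 := hfiber R hRsub
    by_contra hno
    push_neg at hno
    have hzero : ∀ c' ∈ fib, c' ≠ c → fs c' = 0 := by
      intro c' hc' hne'
      by_contra hfsne
      rw [hfib, Finset.mem_filter, Finset.mem_range] at hc'
      obtain ⟨hc'lt, hc'R, hc'a⟩ := hc'
      have hc'nsub : ¬ S n c' ⊆ S n i := by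
        intro hsub
        have : S n c' = R := by rw [← hc'R, Finset.inter_eq_left.mpr hsub]
        exact hne' (S_inj hc'lt hclt (this.trans hR))
      exact hno c' (Finset.mem_filter.mpr
        ⟨Finset.mem_filter.mpr ⟨Finset.mem_range.mpr hc'lt, hc'nsub, hc'a⟩, hfsne⟩) hc'R
    have : ∑ c' ∈ fib, fs c' = fs c :=
      Finset.sum_eq_single_of_mem c hcfib hzero
    rw [hsum0] at this
    exact hcne this.symm
  choose phi hphi1 hphi2 using hex
  have hwAB1 : wA ≤ (B1.filter fun c => fs c ≠ 0).card := by
    rw [hwA]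
    refine Finset.card_le_card_of_injOn
      (fun c => if h : c ∈ Acols.filter fun c => fs c ≠ 0 then phi c h else 0) ?_ ?_
    · intro c hc
      simp only
      rw [dif_pos (Finset.mem_coe.mp hc)]
      exact hphi1 c hc
    · intro c1 h1 c2 h2 heq
      simp only [Finset.mem_coe] at h1 h2
      simp only at heq
      rw [dif_pos h1, dif_pos h2] at heq
      have e1 := hphi2 c1 h1
      have e2 := hphi2 c2 h2
      rw [heq] at e1
      have hS12 : S n c1 = S n c2 := by rw [← e1, ← e2]
      have hc1lt : c1 < 2 ^ n := Finset.mem_range.mp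
        (Finset.mem_filter.mp (Finset.mem_filter.mp h1).1).1
      have hc2lt : c2 < 2 ^ n := Finset.mem_range.mp
        (Finset.mem_filter.mp (Finset.mem_filter.mp h2).1).1
      exact S_inj hc1lt hc2lt hS12
  -- B1-support ∪ {ms} sits inside B-support
  have hmsnotB1 : ms ∉ B1.filter fun c => fs c ≠ 0 := by
    rw [Finset.mem_filter, hB1, Finset.mem_filter]
    rintro ⟨⟨_, _, hams'⟩, _⟩
    exact hams' hams
  have hsubBB1 : insert ms (B1.filter fun c => fs c ≠ 0) ⊆
      Bcols.filter fun c => fs c ≠ 0 := by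
    intro x hx
    rcases Finset.mem_insert.mp hx with rfl | hx
    · exact Finset.mem_filter.mpr ⟨hmsB, hfs_ms⟩
    · rw [Finset.mem_filter, hB1, Finset.mem_filter] at hx
      exact Finset.mem_filter.mpr ⟨Finset.mem_filter.mpr ⟨hx.1.1, hx.1.2.1⟩, hx.2⟩
  have hwB_gt : wA < wB := by
    have h1 : (insert ms (B1.filter fun c => fs c ≠ 0)).card =
        (B1.filter fun c => fs c ≠ 0).card + 1 :=
      Finset.card_insert_of_notMem hmsnotB1
    have h2 := Finset.card_le_card hsubBB1
    rw [h1] at h2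
    omega
  -- final count
  have hwAle : wA ≤ Acols.card := Finset.card_le_card (Finset.filter_subset _ _)
  have hsplit : wt n (g n i + fs) = (Acols.card - wA) + wB := by
    unfold wt
    have hun : Acols ∪ Bcols = Finset.range (2 ^ n) :=
      Finset.filter_union_filter_not_eq _ _
    have hdecomp : (Finset.range (2 ^ n)).filter (fun c => (g n i + fs) c ≠ 0) =
        (Acols.filter fun c => (g n i + fs) c ≠ 0) ∪
          (Bcols.filter fun c => (g n i + fs) c ≠ 0) := by
      rw [← hun, Finset.filter_union]
    have hdisj : Disjoint (Acols.filter fun c => (g n i + fs) c ≠ 0)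
        (Bcols.filter fun c => (g n i + fs) c ≠ 0) := by
      apply Finset.disjoint_filter_filter
      rw [hAcols, hBcols]
      exact Finset.disjoint_filter_filter_not _ _ _
    rw [hdecomp, Finset.card_union_of_disjoint hdisj]
    have hAa : (Acols.filter fun c => (g n i + fs) c ≠ 0) =
        Acols.filter fun c => fs c = 0 := by
      apply Finset.filter_congr
      intro c hc
      rw [hAcols, Finset.mem_filter, Finset.mem_range] at hc
      have : (g n i + fs) c = 1 + fs c := by
        show g n i c + fs c = 1 + fs c
        rw [show g n i c = G n i c from rfl, G_eq hi hc.1, if_pos hc.2]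
      rw [this]
      generalize fs c = x
      revert x
      decide
    have hBb : (Bcols.filter fun c => (g n i + fs) c ≠ 0) =
        Bcols.filter fun c => fs c ≠ 0 := by
      apply Finset.filter_congr
      intro c hc
      rw [hBcols, Finset.mem_filter, Finset.mem_range] at hc
      have : (g n i + fs) c = fs c := by
        show g n i c + fs c = fs c
        rw [show g n i c = G n i c from rfl, G_eq hi hc.1, if_neg hc.2, zero_add]
      rw [this]
    rw [hAa, hBb, ← hwB]
    have := Finset.card_filter_add_card_filter_not
      (s := Acols) (fun c => fs c ≠ 0)
    have hcompl : (Acols.filter fun c => ¬ fs c ≠ 0) = Acols.filter fun c => fs c = 0 := by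
      apply Finset.filter_congr
      intro c _
      simp
    rw [hcompl] at this
    omega
  rw [hsplit, ← cardA]
  omega
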